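/- Let x ∈ {0,1}^n and let E : ({0,1}^n → {0,1}) → {0,1} be the long code of x, i.e., E(f) = f(x) for every function f. Let h : {0,1}^n → {0,1} and b ∈ {0,1} with h(x) ≠ b, and let D be any string indexed by functions that is folded over (h,b), meaning D(f + h) = D(f) + b for all f (addition mod 2 pointwise on functions and mod 2 on bits). Then D and E differ on at least half of all 2^(2^n) coordinates. -/

import Mathlib

/-- If `E` is the long code of `x` (i.e. `E f = f x`) and `D` is folded over `(h, b)`
with `h x ≠ b`, then `D` and `E` differ on at least half of all coordinates. -/
theorem longcode_folded_far (n : ℕ) (hn : 1 ≤ n) (x : Fin n → ZMod 2)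
    (h : (Fin n → ZMod 2) → ZMod 2) (b : ZMod 2)
    (D : ((Fin n → ZMod 2) → ZMod 2) → ZMod 2)
    (hb : h x ≠ b)
    (hD : ∀ f : (Fin n → ZMod 2) → ZMod 2, D (f + h) = D f + b) :
    Fintype.card ((Fin n → ZMod 2) → ZMod 2) ≤
      2 * (Finset.univ.filter
        (fun f : (Fin n → ZMod 2) → ZMod 2 => D f ≠ f x)).card := by
  classical
  set S := Finset.univ.filter
    (fun f : (Fin n → ZMod 2) → ZMod 2 => D f ≠ f x) with hS
  have hcompl : Sᶜ.card ≤ S.card := by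
    apply Finset.card_le_card_of_injOn (fun f => f + h)
    · intro f hf
      simp only [hS, Finset.mem_coe, Finset.mem_compl, Finset.mem_filter, Finset.mem_univ,
        true_and, not_not] at hf ⊢
      rw [hD f, hf]
      intro hcontra
      apply hb
      have : f x + b = f x + h x := by simpa using hcontra
      exact (add_left_cancel this).symm
    · intro f₁ _ f₂ _ hf
      simpa using congrArg (fun g => g - h) hf
  have := Finset.card_compl_add_card S
  omega
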